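/- Let μ_sc be the standard semicircle distribution, i.e., the measure on ℝ with density y ↦ (1/(2π))·√(4 − y²) on [−2, 2] (and 0 elsewhere) with respect to Lebesgue measure, and let Ũₙ be the monic Chebyshev polynomials of the second kind, defined by Ũ₀ = 1, Ũ₁ = x, Ũₙ₊₁ = x·Ũₙ − Ũₙ₋₁. Then for every n ≥ 1 and every x ∈ ℝ, ∫ ΔŨₙ(x, y) dμ_sc(y) = Ũ_{n−1}(x); that is, the Chebyshev polynomials of the second kind are associated to themselves. -/

import Mathlib

open MeasureTheory Polynomial

/-- The standard semicircle distribution: the measure on `ℝ` with density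
`y ↦ (1/(2π))·√(4 − y²)` on `[−2, 2]` (and `0` elsewhere) w.r.t. Lebesgue measure. -/
noncomputable def semicircleMeasure : Measure ℝ :=
  volume.withDensity fun y =>
    ENNReal.ofReal
      (Set.indicator (Set.Icc (-2 : ℝ) 2)
        (fun y => (1 / (2 * Real.pi)) * Real.sqrt (4 - y ^ 2)) y)

open scoped ENNReal NNReal

lemma sc_int (g : ℝ → ℝ) (hg : Continuous g) :
    ∫ y, g y ∂semicircleMeasure
      = ∫ y in (-2:ℝ)..2, g y * ((1 / (2 * Real.pi)) * Real.sqrt (4 - y ^ 2)) := by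
  set d : ℝ → ℝ := fun y => (1 / (2 * Real.pi)) * Real.sqrt (4 - y ^ 2) with hd
  have hdm : Measurable fun y => (Set.indicator (Set.Icc (-2:ℝ) 2) d y).toNNReal := by
    apply Measurable.real_toNNReal
    exact (Measurable.indicator (by fun_prop) measurableSet_Icc)
  have h0 : semicircleMeasure
      = volume.withDensity fun y => ((Set.indicator (Set.Icc (-2:ℝ) 2) d y).toNNReal : ℝ≥0∞) := by
    unfold semicircleMeasure
    congr 1
  rw [h0, integral_withDensity_eq_integral_smul hdm]
  have h1 : ∀ y, (Set.indicator (Set.Icc (-2:ℝ) 2) d y).toNNReal • g y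
      = Set.indicator (Set.Icc (-2:ℝ) 2) (fun y => g y * d y) y := by
    intro y
    rw [NNReal.smul_def, Real.coe_toNNReal']
    by_cases h : y ∈ Set.Icc (-2:ℝ) 2
    · rw [Set.indicator_of_mem h, Set.indicator_of_mem h]
      have : 0 ≤ d y := by
        apply mul_nonneg
        · positivity
        · exact Real.sqrt_nonneg _
      rw [max_eq_left this, smul_eq_mul]; ring
    · rw [Set.indicator_of_notMem h, Set.indicator_of_notMem h]; simp
  simp_rw [h1]
  rw [integral_indicator measurableSet_Icc, integral_Icc_eq_integral_Ioc,
    ← intervalIntegral.integral_of_le (by norm_num : (-2:ℝ) ≤ 2)]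

lemma sc_integrable (g : ℝ → ℝ) (hg : Continuous g) : Integrable g semicircleMeasure := by
  set d : ℝ → ℝ := fun y => (1 / (2 * Real.pi)) * Real.sqrt (4 - y ^ 2) with hd
  have hdm : Measurable fun y => ENNReal.ofReal (Set.indicator (Set.Icc (-2:ℝ) 2) d y) := by
    apply Measurable.ennreal_ofReal
    exact (Measurable.indicator (by fun_prop) measurableSet_Icc)
  rw [semicircleMeasure, integrable_withDensity_iff hdm (by
    filter_upwards with y using ENNReal.ofReal_lt_top)]
  have heq : ∀ y, g y * (ENNReal.ofReal (Set.indicator (Set.Icc (-2:ℝ) 2) d y)).toReal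
      = Set.indicator (Set.Icc (-2:ℝ) 2) (fun y => g y * d y) y := by
    intro y
    rw [ENNReal.toReal_ofReal_eq_iff.2]
    · by_cases h : y ∈ Set.Icc (-2:ℝ) 2
      · rw [Set.indicator_of_mem h, Set.indicator_of_mem h]
      · rw [Set.indicator_of_notMem h, Set.indicator_of_notMem h]; simp
    · by_cases h : y ∈ Set.Icc (-2:ℝ) 2
      · rw [Set.indicator_of_mem h]
        have : 0 ≤ Real.sqrt (4 - y^2) := Real.sqrt_nonneg _
        positivity
      · rw [Set.indicator_of_notMem h]
  simp_rw [heq]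
  rw [integrable_indicator_iff measurableSet_Icc]
  apply ContinuousOn.integrableOn_compact isCompact_Icc
  exact (hg.mul (by fun_prop)).continuousOn

lemma trig (U : ℕ → Polynomial ℝ) (hU0 : U 0 = 1) (hU1 : U 1 = X)
    (hUrec : ∀ n, U (n + 2) = X * U (n + 1) - U n) :
    ∀ (m : ℕ) (θ : ℝ), (U m).eval (2 * Real.cos θ) * Real.sin θ = Real.sin ((m + 1) * θ) := by
  intro m
  induction m using Nat.twoStepInduction with
  | zero => intro θ; simp [hU0]
  | one =>
    intro θ
    have h : ((1:ℕ):ℝ) + 1 = 2 := by norm_num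
    rw [hU1, eval_X, h, Real.sin_two_mul]
    ring
  | more n ih1 ih2 =>
    intro θ
    rw [hUrec]
    push_cast
    have h1 := ih1 θ
    have h2 := ih2 θ
    have key : Real.sin ((n + 2 + 1) * θ) = 2 * Real.cos θ * Real.sin ((n + 1 + 1) * θ) - Real.sin ((n + 1) * θ) := by
      have : ((n:ℝ) + 2 + 1) * θ = (n + 1 + 1) * θ + θ := by ring
      rw [this, Real.sin_add]
      have : ((n:ℝ) + 1) * θ = (n + 1 + 1) * θ - θ := by ring
      rw [this, Real.sin_sub]
      ring
    push_cast at key h1 h2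
    simp only [eval_mul, eval_sub, eval_X]
    rw [key]
    linear_combination 2 * Real.cos θ * h2 - h1
open MeasureTheory Polynomial intervalIntegral

lemma cos_int (k : ℕ) : ∫ θ in (0:ℝ)..Real.pi, Real.cos (k * θ) = if k = 0 then Real.pi else 0 := by
  rcases Nat.eq_zero_or_pos k with hk | hk
  · simp [hk]
  · have hk' : (k:ℝ) ≠ 0 := by positivity
    rw [if_neg (by omega)]
    have := mul_integral_comp_mul_left (c := (k:ℝ)) (f := Real.cos) (a := 0) (b := Real.pi)
    rw [integral_cos] at this
    simp only [mul_zero, Real.sin_zero, sub_zero] at this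
    rw [Real.sin_nat_mul_pi] at this
    have := mul_eq_zero.1 this
    tauto

lemma sin_sin_int (m : ℕ) :
    ∫ θ in (0:ℝ)..Real.pi, Real.sin ((m+1) * θ) * Real.sin θ
      = if m = 0 then Real.pi / 2 else 0 := by
  have key : ∀ θ : ℝ, Real.sin ((m+1) * θ) * Real.sin θ
      = (Real.cos (m * θ) - Real.cos ((m+2) * θ)) / 2 := by
    intro θ
    have h1 : (m:ℝ) * θ = (m+1) * θ - θ := by ring
    have h2 : ((m:ℝ)+2) * θ = (m+1) * θ + θ := by ring
    rw [h1, h2, Real.cos_sub, Real.cos_add]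
    ring
  simp_rw [key]
  have hic : ∀ c : ℝ, IntervalIntegrable (fun θ : ℝ => Real.cos (c * θ)) volume 0 Real.pi := by
    intro c
    exact (Real.continuous_cos.comp (continuous_const.mul continuous_id)).intervalIntegrable _ _
  rw [intervalIntegral.integral_div, intervalIntegral.integral_sub (hic _) (hic _)]
  have c1 := cos_int m
  have c2 := cos_int (m+2)
  rw [if_neg (Nat.succ_ne_zero _)] at c2
  push_cast at c1 c2
  rw [c1, c2]
  by_cases hm : m = 0 <;> simp [hm]

lemma sc_moment (U : ℕ → Polynomial ℝ) (hU0 : U 0 = 1) (hU1 : U 1 = X)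
    (hUrec : ∀ n, U (n + 2) = X * U (n + 1) - U n) (m : ℕ) :
    ∫ y, (U m).eval y ∂semicircleMeasure = if m = 0 then 1 else 0 := by
  have hc : Continuous fun y => (U m).eval y := (U m).continuous
  rw [sc_int _ hc]
  set g : ℝ → ℝ := fun y => (U m).eval y * ((1 / (2 * Real.pi)) * Real.sqrt (4 - y ^ 2)) with hg
  have hgc : Continuous g := by
    apply hc.mul
    exact continuous_const.mul (Real.continuous_sqrt.comp (by fun_prop))
  have hderiv : ∀ θ ∈ Set.uIcc (0:ℝ) Real.pi,
      HasDerivAt (fun θ => 2 * Real.cos θ) (-(2 * Real.sin θ)) θ := by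
    intro θ _
    simpa [mul_comm] using (Real.hasDerivAt_cos θ).const_mul 2
  have hsub := intervalIntegral.integral_comp_smul_deriv hderiv (by fun_prop) hgc
  simp only [Real.cos_zero, Real.cos_pi, mul_one] at hsub
  have h2 : (2:ℝ) * (-1) = -2 := by norm_num
  rw [h2, intervalIntegral.integral_symm (-2) 2] at hsub
  have h3 : ∫ θ in (0:ℝ)..Real.pi, (-(2 * Real.sin θ)) • (g ∘ fun θ => 2 * Real.cos θ) θ
      = - ∫ θ in (0:ℝ)..Real.pi, (2 * Real.sin θ) * g (2 * Real.cos θ) := by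
    rw [← intervalIntegral.integral_neg]
    congr 1
    funext θ
    simp [smul_eq_mul]
  rw [h3, neg_inj] at hsub
  rw [← hsub]
  have heq : Set.EqOn (fun θ => (2 * Real.sin θ) * g (2 * Real.cos θ))
      (fun θ => (2 / Real.pi) * (Real.sin ((m+1) * θ) * Real.sin θ)) (Set.uIcc 0 Real.pi) := by
    intro θ hθ
    rw [Set.uIcc_of_le Real.pi_nonneg] at hθ
    have hs : 0 ≤ Real.sin θ := Real.sin_nonneg_of_nonneg_of_le_pi hθ.1 hθ.2
    have hsq : (4:ℝ) - (2 * Real.cos θ) ^ 2 = (2 * Real.sin θ) ^ 2 := by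
      have := Real.sin_sq_add_cos_sq θ
      nlinarith
    have hsqrt : Real.sqrt (4 - (2 * Real.cos θ) ^ 2) = 2 * Real.sin θ := by
      rw [hsq, Real.sqrt_sq (by positivity)]
    have htrig := trig U hU0 hU1 hUrec m θ
    simp only [hg]
    rw [hsqrt]
    have hpi : Real.pi ≠ 0 := Real.pi_ne_zero
    linear_combination (2 * Real.sin θ / Real.pi) * htrig
  rw [intervalIntegral.integral_congr heq, intervalIntegral.integral_const_mul,
    sin_sin_int m]
  by_cases hm : m = 0 <;> simp [hm]

lemma eval_aeval (v : Fin 2 → ℝ) (i : Fin 2) (p : Polynomial ℝ) :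
    MvPolynomial.eval v (Polynomial.aeval (MvPolynomial.X i) p) = p.eval (v i) := by
  induction p using Polynomial.induction_on' with
  | add p q hp hq => simp [hp, hq]
  | monomial n a => simp [Polynomial.aeval_monomial, Polynomial.eval_monomial]

lemma sum_identity (U : ℕ → Polynomial ℝ) (hU0 : U 0 = 1) (hU1 : U 1 = X)
    (hUrec : ∀ n, U (n + 2) = X * U (n + 1) - U n) (n : ℕ) :
    (MvPolynomial.X (0 : Fin 2) - MvPolynomial.X 1 : MvPolynomial (Fin 2) ℝ) *
        ∑ j ∈ Finset.range n, (Polynomial.aeval (MvPolynomial.X (0 : Fin 2)) (U j)) *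
          (Polynomial.aeval (MvPolynomial.X (1 : Fin 2)) (U (n - 1 - j)))
      = Polynomial.aeval (MvPolynomial.X 0) (U n) - Polynomial.aeval (MvPolynomial.X 1) (U n) := by
  set A : ℕ → MvPolynomial (Fin 2) ℝ := fun j => Polynomial.aeval (MvPolynomial.X 0) (U j) with hA
  set B : ℕ → MvPolynomial (Fin 2) ℝ := fun j => Polynomial.aeval (MvPolynomial.X 1) (U j) with hB
  have hA0 : A 0 = 1 := by simp [hA, hU0]
  have hA1 : A 1 = MvPolynomial.X 0 := by simp [hA, hU1]
  have hArec : ∀ j, A (j + 2) = MvPolynomial.X 0 * A (j + 1) - A j := by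
    intro j; simp [hA, hUrec j, mul_comm]
  have hB0 : B 0 = 1 := by simp [hB, hU0]
  have hBrec : ∀ j, B (j + 2) = MvPolynomial.X 1 * B (j + 1) - B j := by
    intro j; simp [hB, hUrec j, mul_comm]
  have hrwA : ∀ j, (Polynomial.aeval (MvPolynomial.X (0:Fin 2)) : Polynomial ℝ →ₐ[ℝ] MvPolynomial (Fin 2) ℝ) (U j) = A j := fun j => rfl
  have hrwB : ∀ j, (Polynomial.aeval (MvPolynomial.X (1:Fin 2)) : Polynomial ℝ →ₐ[ℝ] MvPolynomial (Fin 2) ℝ) (U j) = B j := fun j => rfl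
  simp only [hrwA, hrwB]
  induction n using Nat.twoStepInduction with
  | zero => simp [hA, hB, hU0]
  | one => simp [hA, hB, hU0, hU1]
  | more n ih1 ih2 =>
    have hS : ∑ j ∈ Finset.range (n+2), A j * B (n + 2 - 1 - j)
        = MvPolynomial.X 0 * ∑ j ∈ Finset.range (n+1), A j * B (n + 1 - 1 - j)
          - ∑ j ∈ Finset.range n, A j * B (n - 1 - j) + B (n+1) := by
      rw [Finset.sum_range_succ' (fun j => A j * B (n + 2 - 1 - j))]
      rw [Finset.sum_range_succ' (fun j => A (j+1) * B (n + 2 - 1 - (j+1)))]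
      rw [Finset.sum_range_succ' (fun j => A j * B (n + 1 - 1 - j))]
      have e0 : n + 2 - 1 - 0 = n + 1 := by omega
      have e1 : n + 2 - 1 - (0 + 1) = n := by omega
      have e2 : n + 1 - 1 - 0 = n := by omega
      have key : ∀ j ∈ Finset.range n,
          A (j + 1 + 1) * B (n + 2 - 1 - (j + 1 + 1))
            = MvPolynomial.X 0 * (A (j+1) * B (n + 1 - 1 - (j+1))) - A j * B (n - 1 - j) := by
        intro j hj
        rw [Finset.mem_range] at hj
        have e3 : n + 2 - 1 - (j + 1 + 1) = n - 1 - j := by omega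
        have e4 : n + 1 - 1 - (j + 1) = n - 1 - j := by omega
        rw [e3, e4, hArec j]
        ring
      rw [Finset.sum_congr rfl key, Finset.sum_sub_distrib, e0, e1, e2, hA0, hA1,
        ← Finset.mul_sum]
      ring
    rw [hS, hArec n, hBrec n]
    linear_combination (MvPolynomial.X (0 : Fin 2)) * ih2 - ih1


/-- the monic Chebyshev polynomials of the second kind
(`Ũ₀ = 1`, `Ũ₁ = x`, `Ũₙ₊₁ = x·Ũₙ − Ũₙ₋₁`) are associated to themselves:
`∫ ΔŨₙ(x, y) dμ_sc(y) = Ũ_{n−1}(x)` for every `n ≥ 1`, where `ΔŨₙ` is the unique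
two-variable polynomial with `Ũₙ(x) − Ũₙ(y) = (x − y)·ΔŨₙ(x, y)`. -/
theorem chebyshevU_associated_to_itself (U : ℕ → Polynomial ℝ)
    (hU0 : U 0 = 1) (hU1 : U 1 = X)
    (hUrec : ∀ n, U (n + 2) = X * U (n + 1) - U n)
    (n : ℕ) (hn : 1 ≤ n) (x : ℝ)
    (D : MvPolynomial (Fin 2) ℝ)
    (hD : (MvPolynomial.X 0 - MvPolynomial.X 1) * D =
      Polynomial.aeval (MvPolynomial.X 0) (U n) - Polynomial.aeval (MvPolynomial.X 1) (U n)) :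
    ∫ y, MvPolynomial.eval ![x, y] D ∂semicircleMeasure = (U (n - 1)).eval x := by
  have hS := sum_identity U hU0 hU1 hUrec n
  have hX : (MvPolynomial.X (0:Fin 2) - MvPolynomial.X 1 : MvPolynomial (Fin 2) ℝ) ≠ 0 := by
    intro h
    have := congrArg (MvPolynomial.eval ![1, 0]) h
    simp at this
  have hDeq : D = ∑ j ∈ Finset.range n,
      (Polynomial.aeval (MvPolynomial.X (0 : Fin 2)) (U j)) *
        (Polynomial.aeval (MvPolynomial.X (1 : Fin 2)) (U (n - 1 - j))) :=
    mul_left_cancel₀ hX (by rw [hD, hS])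
  rw [hDeq]
  have heval : ∀ y : ℝ, MvPolynomial.eval ![x, y] (∑ j ∈ Finset.range n,
      (Polynomial.aeval (MvPolynomial.X (0 : Fin 2)) (U j)) *
        (Polynomial.aeval (MvPolynomial.X (1 : Fin 2)) (U (n - 1 - j))))
      = ∑ j ∈ Finset.range n, (U j).eval x * (U (n - 1 - j)).eval y := by
    intro y
    rw [map_sum]
    refine Finset.sum_congr rfl fun j _ => ?_
    rw [map_mul, eval_aeval, eval_aeval]
    simp
  simp_rw [heval]
  rw [integral_finset_sum _ (fun j _ => ((continuous_const.mul (U (n-1-j)).continuous) |>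
    sc_integrable _ |>.congr (by rfl)))]
  have hterm : ∀ j, ∫ y, (U j).eval x * (U (n - 1 - j)).eval y ∂semicircleMeasure
      = (U j).eval x * (if n - 1 - j = 0 then 1 else 0) := by
    intro j
    rw [MeasureTheory.integral_const_mul, sc_moment U hU0 hU1 hUrec]
  simp_rw [hterm]
  rw [Finset.sum_eq_single_of_mem (n - 1) (Finset.mem_range.2 (by omega))]
  · rw [if_pos (by omega), mul_one]
  · intro j hj hne
    rw [Finset.mem_range] at hj
    rw [if_neg (by omega), mul_zero]
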